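/- Let X and Y be Banach spaces, g : X → Y a continuously differentiable mapping, f : Y → ℝ∪{+∞} a proper lower semicontinuous convex function, and x̄ ∈ X with g(x̄) ∈ int(dom f). Set φ := f ∘ g. Then there exists δ > 0 such that for all x ∈ B(x̄, δ) and all h ∈ X, φ'_H(x; h) = d⁺f(g(x); ∇g(x)(h)). -/

import Mathlib

open Filter Metric Set Pointwise Topology
open scoped ENNReal

noncomputable section

/-- The Bouligand (contingent) tangent cone of `A` at `u`. -/
def bouligand {X : Type*} [NormedAddCommGroup X] [NormedSpace ℝ X] (A : Set X) (u : X) :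
    Set X :=
  {v | ∃ (vs : ℕ → X) (ts : ℕ → ℝ),
    Tendsto vs atTop (𝓝 v) ∧ Tendsto ts atTop (𝓝 0) ∧ (∀ n, 0 < ts n) ∧
    ∀ n, u + ts n • vs n ∈ A}

/-- The Shapiro first order contact property of `A` at `a`. -/
def shapiro {X : Type*} [NormedAddCommGroup X] [NormedSpace ℝ X] (A : Set X) (a : X) : Prop :=
  ∀ ε > 0, ∃ δ > 0, ∀ x ∈ A ∩ ball a δ, ∀ u ∈ A ∩ ball a δ,
    infDist (x - u) (bouligand A u) ≤ ε * ‖x - u‖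

/-- The lower Hadamard directional derivative of `φ` at `x` in direction `h`. -/
def hadamardDeriv {X : Type*} [NormedAddCommGroup X] [NormedSpace ℝ X]
    (φ : X → EReal) (x h : X) : EReal :=
  liminf (fun p : ℝ × X => (((1 : ℝ) / p.1 : ℝ) : EReal) * (φ (x + p.1 • p.2) - φ x))
    ((𝓝[>] (0 : ℝ)) ×ˢ 𝓝 h)

/-- The epigraph of an `EReal`-valued function, as a subset of `X × ℝ`. -/
def epigraph {X : Type*} (φ : X → EReal) : Set (X × ℝ) := {p | φ p.1 ≤ (p.2 : EReal)}

/-- The Hausdorff-Pompeiu excess of `C` beyond `D`. -/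
def excess {X : Type*} [PseudoEMetricSpace X] (C D : Set X) : ℝ≥0∞ :=
  ⨆ c ∈ C, EMetric.infEdist c D

/-- Metric regularity of `φ` around `xbar` (for `φ xbar`). -/
def metReg {X Y : Type*} [NormedAddCommGroup X] [NormedAddCommGroup Y]
    (φ : X → Y) (xbar : X) : Prop :=
  ∃ κ > (0 : ℝ), ∃ U ∈ 𝓝 xbar, ∃ V ∈ 𝓝 (φ xbar), ∀ x ∈ U, ∀ y ∈ V,
    EMetric.infEdist x (φ ⁻¹' {y}) ≤ ENNReal.ofReal (κ * ‖φ x - y‖)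
/-- Directional derivative of an `EReal`-valued convex function (the limit exists by
convexity, so we express it as a liminf). -/
def dPlus {Y : Type*} [NormedAddCommGroup Y] [NormedSpace ℝ Y] (f : Y → EReal) (y v : Y) :
    EReal :=
  liminf (fun t : ℝ => (((1 : ℝ) / t : ℝ) : EReal) * (f (y + t • v) - f y)) (𝓝[>] (0 : ℝ))

set_option maxHeartbeats 1000000

lemma epi_combo {Y : Type*} [NormedAddCommGroup Y] [NormedSpace ℝ Y]
    {f : Y → EReal} (hconv : Convex ℝ (epigraph f)) {p q : Y} {P Q a b : ℝ}
    (hP : f p ≤ (P : EReal)) (hQ : f q ≤ (Q : EReal))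
    (ha : 0 ≤ a) (hb : 0 ≤ b) (hab : a + b = 1) :
    f (a • p + b • q) ≤ ((a * P + b * Q : ℝ) : EReal) := by
  have h1 : ((p, P) : Y × ℝ) ∈ epigraph f := hP
  have h2 : ((q, Q) : Y × ℝ) ∈ epigraph f := hQ
  have h := hconv h1 h2 ha hb hab
  have : a • ((p, P) : Y × ℝ) + b • (q, Q) = (a • p + b • q, a * P + b * Q) := by
    simp [Prod.ext_iff, smul_eq_mul]
  rw [this] at h
  exact h

-- Baire: lsc function finite on a closed ball is bounded above on some small ambient ball
lemma baire_bound {Y : Type*} [NormedAddCommGroup Y] [NormedSpace ℝ Y] [CompleteSpace Y]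
    {f : Y → EReal} (hlsc : LowerSemicontinuous f) (hbot : ∀ y, f y ≠ ⊥)
    {y0 : Y} {R : ℝ} (hR : 0 < R) (hsub : closedBall y0 R ⊆ {y | f y ≠ ⊤}) :
    ∃ z' : Y, ∃ ε' > 0, dist z' y0 ≤ R ∧ ∃ M : ℝ,
      ∀ y ∈ ball z' ε', f y ≤ (M : EReal) := by
  set B := closedBall y0 R with hB
  have hBc : IsClosed B := isClosed_closedBall
  haveI : CompleteSpace B := hBc.completeSpace_coe
  haveI : Nonempty B := ⟨⟨y0, mem_closedBall_self hR.le⟩⟩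
  set C : ℕ → Set B := fun n => Subtype.val ⁻¹' (f ⁻¹' Iic ((n : ℝ) : EReal)) with hC
  have hclosed : ∀ n, IsClosed (C n) :=
    fun n => (hlsc.isClosed_preimage _).preimage continuous_subtype_val
  have hcover : ⋃ n, C n = univ := by
    ext z
    simp only [mem_iUnion, mem_univ, iff_true]
    have hzt : f z ≠ ⊤ := hsub z.2
    refine ⟨⌈(f z).toReal⌉₊, ?_⟩
    have : f ↑z = (((f ↑z).toReal : ℝ) : EReal) := (EReal.coe_toReal hzt (hbot _)).symm
    simp only [hC, mem_preimage, mem_Iic]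
    rw [this]
    exact_mod_cast EReal.coe_le_coe_iff.2 (Nat.le_ceil _)
  obtain ⟨n, z, hz⟩ := nonempty_interior_of_iUnion_of_closed hclosed hcover
  rw [mem_interior_iff_mem_nhds] at hz
  rw [show z = ⟨z.1, z.2⟩ from rfl, nhds_subtype_eq_comap, Filter.mem_comap] at hz
  obtain ⟨t, ht, hts⟩ := hz
  obtain ⟨ε, hε, hball⟩ := Metric.mem_nhds_iff.1 ht
  -- f y ≤ n on B ∩ ball z ε
  have hfn : ∀ y, y ∈ closedBall y0 R → dist y ↑z < ε → f y ≤ ((n : ℝ) : EReal) := by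
    intro y hy hd
    have : (⟨y, hy⟩ : B) ∈ C n := hts (hball (mem_ball.2 hd))
    exact this
  -- pull z toward y0
  set θ : ℝ := min 1 (ε / (4 * R)) with hθ
  have hθ0 : 0 < θ := lt_min one_pos (by positivity)
  have hθ1 : θ ≤ 1 := min_le_left _ _
  have hθε : θ * R ≤ ε / 4 := by
    calc θ * R ≤ (ε / (4 * R)) * R := by
          have := min_le_right 1 (ε / (4 * R)); nlinarith
      _ = ε / 4 := by field_simp
  set z' : Y := y0 + (1 - θ) • ((z : Y) - y0) with hz'
  have hzy0 : ‖(z : Y) - y0‖ ≤ R := by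
    have := z.2; rw [mem_closedBall, dist_eq_norm] at this; exact this
  have hz'y0 : ‖z' - y0‖ ≤ (1 - θ) * R := by
    have : z' - y0 = (1 - θ) • ((z : Y) - y0) := by rw [hz']; module
    rw [this, norm_smul, Real.norm_eq_abs, abs_of_nonneg (by linarith)]
    nlinarith
  have hz'z : ‖z' - (z : Y)‖ ≤ θ * R := by
    have : z' - (z : Y) = -(θ • ((z : Y) - y0)) := by
      rw [hz']; module
    rw [this, norm_neg, norm_smul, Real.norm_eq_abs, abs_of_nonneg hθ0.le]
    nlinarith
  refine ⟨z', θ * R, by positivity, ?_, n, ?_⟩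
  · rw [dist_eq_norm]; nlinarith
  intro y hy
  rw [mem_ball, dist_eq_norm] at hy
  apply hfn
  · rw [mem_closedBall, dist_eq_norm]
    calc ‖y - y0‖ ≤ ‖y - z'‖ + ‖z' - y0‖ := norm_sub_le_norm_sub_add_norm_sub _ _ _
      _ ≤ θ * R + (1 - θ) * R := by linarith
      _ = R := by ring
  · rw [dist_eq_norm]
    calc ‖y - (z : Y)‖ ≤ ‖y - z'‖ + ‖z' - (z : Y)‖ := norm_sub_le_norm_sub_add_norm_sub _ _ _
      _ < θ * R + θ * R := by linarith
      _ ≤ ε / 4 + ε / 4 := by linarith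
      _ < ε := by linarith

lemma loc_lip {Y : Type*} [NormedAddCommGroup Y] [NormedSpace ℝ Y] [CompleteSpace Y]
    {f : Y → EReal} (hlsc : LowerSemicontinuous f) (hbot : ∀ y, f y ≠ ⊥)
    (hconv : Convex ℝ (epigraph f)) {y0 : Y} (hdom : y0 ∈ interior {y | f y ≠ ⊤}) :
    ∃ ρ > (0 : ℝ), ∃ L : ℝ, 0 ≤ L ∧
      (∀ y ∈ ball y0 ρ, f y = (((f y).toReal : ℝ) : EReal)) ∧
      (∀ a ∈ ball y0 ρ, ∀ b ∈ ball y0 ρ,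
        |(f a).toReal - (f b).toReal| ≤ L * dist a b) := by
  obtain ⟨ε, hε, hball⟩ := Metric.mem_nhds_iff.1 (mem_interior_iff_mem_nhds.1 hdom)
  have hsub : closedBall y0 (ε / 2) ⊆ {y | f y ≠ ⊤} :=
    (closedBall_subset_ball (by linarith)).trans hball
  obtain ⟨z', ε', hε', hdz, M, hM⟩ := baire_bound hlsc hbot (by linarith : (0:ℝ) < ε / 2) hsub
  set w : Y := (2 : ℝ) • y0 - z' with hw
  have hwB : w ∈ closedBall y0 (ε / 2) := by
    rw [mem_closedBall, dist_eq_norm]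
    have : w - y0 = -(z' - y0) := by rw [hw]; module
    rw [this, norm_neg, ← dist_eq_norm]
    exact hdz
  have hwt : f w ≠ ⊤ := hsub hwB
  set c : ℝ := (f w).toReal with hc
  have hwc : f w ≤ (c : EReal) := by
    rw [hc, EReal.coe_toReal hwt (hbot w)]
  set ρ0 : ℝ := ε' / 2 with hρ0
  have hρ0pos : 0 < ρ0 := by positivity
  -- upper bound M1 on ball y0 ρ0
  set M1 : ℝ := (1/2) * M + (1/2) * c with hM1
  have hub : ∀ y ∈ ball y0 ρ0, f y ≤ (M1 : EReal) := by
    intro y hy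
    rw [mem_ball, dist_eq_norm] at hy
    set u : Y := (2 : ℝ) • y - w with hu
    have hu' : u ∈ ball z' ε' := by
      rw [mem_ball, dist_eq_norm]
      have : u - z' = (2 : ℝ) • (y - y0) := by rw [hu, hw]; module
      rw [this, norm_smul, Real.norm_eq_abs]
      rw [abs_of_nonneg (by norm_num : (0:ℝ) ≤ 2)]
      linarith
    have hcombo : (1/2 : ℝ) • u + (1/2 : ℝ) • w = y := by rw [hu]; module
    have := epi_combo (a := 1/2) (b := 1/2) hconv (hM u hu') hwc (by norm_num) (by norm_num) (by norm_num)
    rwa [hcombo] at this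
  have hne : ∀ y ∈ ball y0 ρ0, f y ≠ ⊤ := fun y hy =>
    ne_top_of_le_ne_top (EReal.coe_ne_top M1) (hub y hy)
  have hcoe : ∀ y ∈ ball y0 ρ0, f y = (((f y).toReal : ℝ) : EReal) := fun y hy =>
    (EReal.coe_toReal (hne y hy) (hbot y)).symm
  set F : Y → ℝ := fun y => (f y).toReal with hF
  have hFle : ∀ y ∈ ball y0 ρ0, F y ≤ M1 := by
    intro y hy
    have := hub y hy
    rw [hcoe y hy] at this
    exact EReal.coe_le_coe_iff.1 this
  -- lower bound
  have hy0 : y0 ∈ ball y0 ρ0 := mem_ball_self hρ0pos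
  set r0 : ℝ := F y0 with hr0
  have hlb : ∀ y ∈ ball y0 ρ0, 2 * r0 - M1 ≤ F y := by
    intro y hy
    set q : Y := (2 : ℝ) • y0 - y with hq
    have hq' : q ∈ ball y0 ρ0 := by
      rw [mem_ball, dist_eq_norm]
      have : q - y0 = -(y - y0) := by rw [hq]; module
      rw [this, norm_neg, ← dist_eq_norm]
      exact mem_ball.1 hy
    have hfy : f y ≤ ((F y : ℝ) : EReal) := le_of_eq (hcoe y hy)
    have hcombo : (1/2 : ℝ) • y + (1/2 : ℝ) • q = y0 := by rw [hq]; module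
    have h2 := epi_combo (a := 1/2) (b := 1/2) hconv hfy (hub q hq') (by norm_num) (by norm_num) (by norm_num)
    rw [hcombo, hcoe y0 hy0] at h2
    have h3 : r0 ≤ 1 / 2 * F y + 1 / 2 * M1 := EReal.coe_le_coe_iff.1 h2
    clear_value F r0 M1
    linarith
  set M2 : ℝ := |M1| + |2 * r0 - M1| with hM2
  have habs : ∀ a : Y, dist a y0 < ρ0 → |F a| ≤ M2 := by
    intro a ha
    have h1 := hFle a (mem_ball.2 ha)
    have h2 := hlb a (mem_ball.2 ha)
    rw [abs_le]
    clear_value F r0 M1 M2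
    constructor
    · have := neg_abs_le (2 * r0 - M1); have := abs_nonneg M1; linarith
    · have := le_abs_self M1; have := abs_nonneg (2 * r0 - M1); linarith
  have hFconv : ConvexOn ℝ (ball y0 ρ0) F := by
    refine ⟨convex_ball _ _, ?_⟩
    intro p hp q hq a b ha hb hab
    have hmem : a • p + b • q ∈ ball y0 ρ0 := (convex_ball y0 ρ0) hp hq ha hb hab
    have h1 := epi_combo hconv (le_of_eq (hcoe p hp)) (le_of_eq (hcoe q hq)) ha hb hab
    rw [hcoe _ hmem] at h1
    exact EReal.coe_le_coe_iff.1 h1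
  have hlip := hFconv.lipschitzOnWith_of_abs_le (half_pos hρ0pos) habs
  rw [sub_half] at hlip
  refine ⟨ρ0 / 2, half_pos hρ0pos, ((2 * M2 / (ρ0 / 2)).toNNReal : ℝ), NNReal.coe_nonneg _,
    fun y hy => hcoe y (ball_subset_ball (by linarith) hy), ?_⟩
  intro a ha b hb
  have := hlip.dist_le_mul a ha b hb
  rwa [Real.dist_eq] at this

lemma liminf_coe_eq {α : Type*} {F : Filter α} [F.NeBot] {u : α → ℝ} {c : ℝ}
    (hb : ∀ᶠ a in F, |u a| ≤ c) :
    liminf (fun a => ((u a : ℝ) : EReal)) F = ((liminf u F : ℝ) : EReal) := by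
  have bddle : F.IsBoundedUnder (· ≤ ·) u :=
    ⟨c, eventually_map.2 (hb.mono fun a h => (abs_le.1 h).2)⟩
  have bddge : F.IsBoundedUnder (· ≥ ·) u :=
    ⟨-c, eventually_map.2 (hb.mono fun a h => (abs_le.1 h).1)⟩
  have hmono : Monotone (fun r : ℝ => (r : EReal)) := fun a b h => EReal.coe_le_coe_iff.2 h
  exact (hmono.map_liminf_of_continuousAt u continuous_coe_real_ereal.continuousAt
    bddle.isCoboundedUnder_ge bddge).symm

theorem hadamardDeriv_comp_eq_dPlus {X Y : Type*}
    [NormedAddCommGroup X] [NormedSpace ℝ X] [CompleteSpace X]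
    [NormedAddCommGroup Y] [NormedSpace ℝ Y] [CompleteSpace Y]
    (g : X → Y) (hg : ContDiff ℝ 1 g)
    (f : Y → EReal) (hlsc : LowerSemicontinuous f) (hbot : ∀ y, f y ≠ ⊥)
    (hproper : ∃ y, f y ≠ ⊤) (hconv : Convex ℝ (epigraph f))
    (xbar : X) (hdom : g xbar ∈ interior {y | f y ≠ ⊤}) :
    ∃ δ > (0 : ℝ), ∀ x ∈ ball xbar δ, ∀ h : X,
      hadamardDeriv (fun z => f (g z)) x h = dPlus f (g x) (fderiv ℝ g x h) := by

  obtain ⟨ρ0, hρ0, L, hL0, hcoe, hlipF⟩ := loc_lip hlsc hbot hconv hdom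
  have hgc : ContinuousAt g xbar := hg.continuous.continuousAt
  obtain ⟨δ, hδ, hgδ⟩ := Metric.continuousAt_iff.1 hgc (ρ0 / 2) (by positivity)
  refine ⟨δ, hδ, ?_⟩
  intro x hx h
  set y0 : Y := g xbar with hy0def
  set y : Y := g x with hydef
  have hy : dist y y0 < ρ0 / 2 := hgδ (mem_ball.1 hx)
  have hyball : y ∈ ball y0 ρ0 := mem_ball.2 (by linarith)
  set A := fderiv ℝ g x with hAdef
  have hA : HasFDerivAt g A x := ((hg.differentiable one_ne_zero) x).hasFDerivAt
  set v : Y := A h with hvdef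
  set F : Y → ℝ := fun z => (f z).toReal with hFdef
  set P := (𝓝[>] (0 : ℝ)) ×ˢ 𝓝 h with hPdef
  haveI : P.NeBot := Filter.prod_neBot.2 ⟨inferInstance, inferInstance⟩
  set u : ℝ × X → ℝ := fun p => 1 / p.1 * (F (g (x + p.1 • p.2)) - F y) with hudef
  set wf : ℝ → ℝ := fun t => 1 / t * (F (y + t • v) - F y) with hwfdef
  -- basic eventual facts
  have evt0 : ∀ᶠ p : ℝ × X in P, 0 < p.1 :=
    Filter.Eventually.prod_inl (eventually_mem_nhdsWithin.mono fun t ht => ht) _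
  have evsmall : ∀ t1 : ℝ, 0 < t1 → ∀ᶠ p : ℝ × X in P, p.1 < t1 := by
    intro t1 ht1
    exact Filter.Eventually.prod_inl
      ((eventually_lt_nhds ht1).filter_mono nhdsWithin_le_nhds) _
  have evnear : ∀ r : ℝ, 0 < r → ∀ᶠ p : ℝ × X in P, dist p.2 h < r := by
    intro r hr
    exact Filter.Eventually.prod_inr
      (Metric.eventually_nhds_iff.2 ⟨r, hr, fun {z} hz => hz⟩) _
  -- the key approximation estimate
  have evD : ∀ β : ℝ, 0 < β → ∀ᶠ p : ℝ × X in P,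
      ‖g (x + p.1 • p.2) - (y + p.1 • v)‖ ≤ β * p.1 := by
    intro β hβ
    set cc : ℝ := β / (2 * (‖h‖ + 1)) with hcc
    have hccpos : 0 < cc := by positivity
    set r : ℝ := min 1 (β / (2 * (‖A‖ + 1))) with hr
    have hrpos : 0 < r := lt_min one_pos (by positivity)
    have hO := (hasFDerivAt_iff_isLittleO_nhds_zero.1 hA).def hccpos
    have h1 : Filter.Tendsto (fun p : ℝ × X => p.1) P (𝓝 (0 : ℝ)) :=
      tendsto_fst.mono_right nhdsWithin_le_nhds
    have htend : Filter.Tendsto (fun p : ℝ × X => p.1 • p.2) P (𝓝 (0 : X)) := by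
      have := h1.smul tendsto_snd
      rwa [zero_smul] at this
    filter_upwards [evt0, evnear r hrpos, htend.eventually hO] with p hp1 hp2 hp3
    obtain ⟨t, h'⟩ := p
    simp only at hp1 hp2 hp3 ⊢
    have hsplit : g (x + t • h') - (y + t • v) =
        (g (x + t • h') - g x - A (t • h')) + t • (A (h' - h)) := by
      rw [hydef, hvdef]
      rw [map_sub, map_smul]
      module
    have hn1 : ‖g (x + t • h') - g x - A (t • h')‖ ≤ cc * ‖t • h'‖ := hp3
    have hnorm_h' : ‖h'‖ ≤ ‖h‖ + 1 := by
      have : ‖h' - h‖ < r := by rwa [dist_eq_norm] at hp2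
      have hr1 : r ≤ 1 := min_le_left _ _
      calc ‖h'‖ ≤ ‖h' - h‖ + ‖h‖ := by
            have := norm_sub_norm_le h' h; linarith [norm_sub_rev h' h ▸ this]
        _ ≤ ‖h‖ + 1 := by linarith
    have hsmul : ‖t • h'‖ = t * ‖h'‖ := by
      rw [norm_smul, Real.norm_eq_abs, abs_of_pos hp1]
    have hn2 : ‖t • A (h' - h)‖ ≤ t * (‖A‖ * r) := by
      rw [norm_smul, Real.norm_eq_abs, abs_of_pos hp1]
      have h4 : ‖A (h' - h)‖ ≤ ‖A‖ * ‖h' - h‖ := A.le_opNorm _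
      have h5 : ‖h' - h‖ < r := by rwa [dist_eq_norm] at hp2
      have := mul_le_mul_of_nonneg_left
        (le_trans h4 (mul_le_mul_of_nonneg_left h5.le (norm_nonneg A))) hp1.le
      nlinarith [norm_nonneg (A (h' - h))]
    calc ‖g (x + t • h') - (y + t • v)‖
        = ‖(g (x + t • h') - g x - A (t • h')) + t • (A (h' - h))‖ := by rw [hsplit]
      _ ≤ ‖g (x + t • h') - g x - A (t • h')‖ + ‖t • A (h' - h)‖ := norm_add_le _ _
      _ ≤ cc * (t * ‖h'‖) + t * (‖A‖ * r) := by rw [← hsmul]; exact add_le_add hn1 hn2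
      _ ≤ cc * (t * (‖h‖ + 1)) + t * (‖A‖ * r) := by
          have := mul_le_mul_of_nonneg_left hnorm_h' hp1.le
          nlinarith
      _ ≤ (β / 2) * t + (β / 2) * t := by
          have e1 : cc * (t * (‖h‖ + 1)) = β / 2 * t := by
            rw [hcc]; field_simp
          have e2 : t * (‖A‖ * r) ≤ β / 2 * t := by
            have hr2 : r ≤ β / (2 * (‖A‖ + 1)) := min_le_right _ _
            have h6 : ‖A‖ * r ≤ ‖A‖ * (β / (2 * (‖A‖ + 1))) :=
              mul_le_mul_of_nonneg_left hr2 (norm_nonneg A)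
            have h7 : ‖A‖ * (β / (2 * (‖A‖ + 1))) ≤ β / 2 := by
              rw [mul_div_assoc', div_le_div_iff₀ (by positivity) (by norm_num)]
              nlinarith [norm_nonneg A]
            nlinarith [norm_nonneg A]
          linarith
      _ = β * t := by ring
  -- ball membership eventual facts
  have hρ8 : (0:ℝ) < ρ0 / (8 * (‖v‖ + 1)) := by positivity
  have hballcomp : ∀ t : ℝ, 0 < t → t < ρ0 / (8 * (‖v‖ + 1)) →
      y + t • v ∈ ball y0 ρ0 ∧ t * (‖v‖ + 1) ≤ ρ0 / 8 := by
    intro t ht hts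
    have hv1 : t * (‖v‖ + 1) ≤ ρ0 / 8 := by
      have h8 : 0 < 8 * (‖v‖ + 1) := by positivity
      rw [lt_div_iff₀ h8] at hts
      nlinarith [norm_nonneg v]
    have hyv : ‖y + t • v - y0‖ ≤ ‖y - y0‖ + t * ‖v‖ := by
      have : y + t • v - y0 = (y - y0) + t • v := by module
      rw [this]
      have := norm_add_le (y - y0) (t • v)
      rw [norm_smul, Real.norm_eq_abs, abs_of_pos ht] at this
      linarith
    have hyy0 : ‖y - y0‖ < ρ0 / 2 := by rwa [← dist_eq_norm]
    refine ⟨mem_ball.2 ?_, hv1⟩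
    rw [dist_eq_norm]
    nlinarith [norm_nonneg v]
  have evBall : ∀ᶠ p : ℝ × X in P,
      g (x + p.1 • p.2) ∈ ball y0 ρ0 ∧ y + p.1 • v ∈ ball y0 ρ0 ∧ 0 < p.1 := by
    filter_upwards [evD 1 one_pos, evsmall _ hρ8, evt0] with p hD hsm hp1
    obtain ⟨hm1, hv1⟩ := hballcomp p.1 hp1 hsm
    refine ⟨?_, hm1, hp1⟩
    rw [mem_ball, dist_eq_norm]
    have h1 : ‖g (x + p.1 • p.2) - y0‖ ≤
        ‖g (x + p.1 • p.2) - (y + p.1 • v)‖ + ‖y + p.1 • v - y0‖ :=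
      norm_sub_le_norm_sub_add_norm_sub _ _ _
    have h2 : ‖y + p.1 • v - y0‖ ≤ ‖y - y0‖ + p.1 * ‖v‖ := by
      have he : y + p.1 • v - y0 = (y - y0) + p.1 • v := by module
      rw [he]
      have := norm_add_le (y - y0) (p.1 • v)
      rw [norm_smul, Real.norm_eq_abs, abs_of_pos hp1] at this
      linarith
    have hyy0 : ‖y - y0‖ < ρ0 / 2 := by rwa [← dist_eq_norm]
    have h3 : p.1 * ‖v‖ ≤ ρ0 / 8 := by nlinarith [norm_nonneg v, hp1.le]
    have h4 : (1:ℝ) * p.1 ≤ ρ0 / 8 := by nlinarith [norm_nonneg v, hp1.le]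
    linarith
  have evEqU : ∀ᶠ p : ℝ × X in P,
      (((1 : ℝ) / p.1 : ℝ) : EReal) * (f (g (x + p.1 • p.2)) - f y) = ((u p : ℝ) : EReal) := by
    filter_upwards [evBall] with p hp
    obtain ⟨hg1, _, _⟩ := hp
    rw [hcoe _ hg1, hcoe _ hyball, ← EReal.coe_sub, ← EReal.coe_mul]
  -- eventual facts on 𝓝[>] 0
  have evt0' : ∀ᶠ t in 𝓝[>] (0:ℝ), 0 < t := eventually_mem_nhdsWithin
  have evsmall' : ∀ᶠ t in 𝓝[>] (0:ℝ), t < ρ0 / (8 * (‖v‖ + 1)) :=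
    (eventually_lt_nhds hρ8).filter_mono nhdsWithin_le_nhds
  have evBall' : ∀ᶠ t in 𝓝[>] (0:ℝ), y + t • v ∈ ball y0 ρ0 ∧ 0 < t := by
    filter_upwards [evt0', evsmall'] with t ht hts
    exact ⟨(hballcomp t ht hts).1, ht⟩
  have evEqW : ∀ᶠ t in 𝓝[>] (0:ℝ),
      (((1 : ℝ) / t : ℝ) : EReal) * (f (y + t • v) - f y) = ((wf t : ℝ) : EReal) := by
    filter_upwards [evBall'] with t ht
    rw [hcoe _ ht.1, hcoe _ hyball, ← EReal.coe_sub, ← EReal.coe_mul]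
  have evWbd : ∀ᶠ t in 𝓝[>] (0:ℝ), |wf t| ≤ L * ‖v‖ := by
    filter_upwards [evBall'] with t ht
    obtain ⟨hm, ht0⟩ := ht
    have hlb := hlipF _ hm _ hyball
    have hd : dist (y + t • v) y = t * ‖v‖ := by
      rw [dist_eq_norm, add_sub_cancel_left, norm_smul, Real.norm_eq_abs, abs_of_pos ht0]
    rw [hd] at hlb
    have habs : |wf t| = 1 / t * |F (y + t • v) - F y| := by
      rw [hwfdef]
      rw [abs_mul, abs_of_pos (by positivity : (0:ℝ) < 1 / t)]
    rw [habs]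
    have h2 : 1 / t * |F (y + t • v) - F y| ≤ 1 / t * (L * (t * ‖v‖)) := by
      apply mul_le_mul_of_nonneg_left _ (by positivity : (0:ℝ) ≤ 1 / t)
      exact hlb
    have h3 : 1 / t * (L * (t * ‖v‖)) = L * ‖v‖ := by field_simp
    clear_value F wf
    linarith
  have evUW : ∀ ε : ℝ, 0 < ε → ∀ᶠ p : ℝ × X in P, |u p - wf p.1| ≤ ε := by
    intro ε hε
    have hβ : (0:ℝ) < ε / (L + 1) := by positivity
    filter_upwards [evD _ hβ, evBall] with p hD hp
    obtain ⟨hg1, hyv1, hp1⟩ := hp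
    have hdiff : u p - wf p.1 = 1 / p.1 * (F (g (x + p.1 • p.2)) - F (y + p.1 • v)) := by
      rw [hudef, hwfdef]; ring
    have hlip2 := hlipF _ hg1 _ hyv1
    rw [dist_eq_norm] at hlip2
    have h2 : |u p - wf p.1| = 1 / p.1 * |F (g (x + p.1 • p.2)) - F (y + p.1 • v)| := by
      rw [hdiff, abs_mul, abs_of_pos (by positivity : (0:ℝ) < 1 / p.1)]
    have h3 : 1 / p.1 * |F (g (x + p.1 • p.2)) - F (y + p.1 • v)| ≤
        1 / p.1 * (L * (ε / (L + 1) * p.1)) := by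
      apply mul_le_mul_of_nonneg_left _ (by positivity : (0:ℝ) ≤ 1 / p.1)
      exact le_trans hlip2 (mul_le_mul_of_nonneg_left hD hL0)
    have h4 : 1 / p.1 * (L * (ε / (L + 1) * p.1)) = L * ε / (L + 1) := by
      field_simp
    have h5 : L * ε / (L + 1) ≤ ε := by
      rw [div_le_iff₀ (by positivity : (0:ℝ) < L + 1)]
      nlinarith
    clear_value F u wf
    linarith
  have evWbdP : ∀ᶠ p : ℝ × X in P, |wf p.1| ≤ L * ‖v‖ :=
    Filter.Eventually.prod_inl evWbd _
  have evUbd : ∀ᶠ p : ℝ × X in P, |u p| ≤ L * ‖v‖ + 1 := by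
    filter_upwards [evUW 1 one_pos, evWbdP] with p h1 h2
    have := abs_add_le (u p - wf p.1) (wf p.1)
    simp only [sub_add_cancel] at this
    clear_value u wf
    linarith
  -- boundedness structures
  have bWle : Filter.IsBoundedUnder (· ≤ ·) (𝓝[>] (0:ℝ)) wf :=
    ⟨L * ‖v‖, eventually_map.2 (evWbd.mono fun t ht => (abs_le.1 ht).2)⟩
  have bWge : Filter.IsBoundedUnder (· ≥ ·) (𝓝[>] (0:ℝ)) wf :=
    ⟨-(L * ‖v‖), eventually_map.2 (evWbd.mono fun t ht => (abs_le.1 ht).1)⟩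
  have bWfle : Filter.IsBoundedUnder (· ≤ ·) P (fun p : ℝ × X => wf p.1) :=
    ⟨L * ‖v‖, eventually_map.2 (evWbdP.mono fun p hp => (abs_le.1 hp).2)⟩
  have bWfge : Filter.IsBoundedUnder (· ≥ ·) P (fun p : ℝ × X => wf p.1) :=
    ⟨-(L * ‖v‖), eventually_map.2 (evWbdP.mono fun p hp => (abs_le.1 hp).1)⟩
  have bUle : Filter.IsBoundedUnder (· ≤ ·) P u :=
    ⟨L * ‖v‖ + 1, eventually_map.2 (evUbd.mono fun p hp => (abs_le.1 hp).2)⟩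
  have bUge : Filter.IsBoundedUnder (· ≥ ·) P u :=
    ⟨-(L * ‖v‖ + 1), eventually_map.2 (evUbd.mono fun p hp => (abs_le.1 hp).1)⟩
  have eq1 : liminf (fun p : ℝ × X => wf p.1) P = liminf wf (𝓝[>] (0:ℝ)) := by
    have hmap : Filter.map (fun p : ℝ × X => wf p.1) P = Filter.map wf (𝓝[>] (0:ℝ)) := by
      have hrfl : (fun p : ℝ × X => wf p.1) = wf ∘ Prod.fst := rfl
      rw [hrfl, ← Filter.map_map, hPdef, Filter.map_fst_prod]
    unfold Filter.liminf
    rw [hmap]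
  have huw : liminf u P = liminf wf (𝓝[>] (0:ℝ)) := by
    apply le_antisymm
    · apply le_of_forall_pos_le_add
      intro ε hε
      have h1 : liminf u P ≤ liminf (fun p : ℝ × X => wf p.1 + ε) P := by
        apply Filter.liminf_le_liminf
        · exact (evUW ε hε).mono fun p hp => by
            have := (abs_le.1 hp).2; clear_value u wf; linarith
        · exact bUge
        · refine Filter.IsBoundedUnder.isCoboundedUnder_ge
            ⟨L * ‖v‖ + ε, eventually_map.2 (evWbdP.mono fun p hp => ?_)⟩
          have := (abs_le.1 hp).2; clear_value wf; linarith
      rwa [liminf_add_const P (fun p : ℝ × X => wf p.1) ε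
        bWfle.isCoboundedUnder_ge bWfge, eq1] at h1
    · apply le_of_forall_pos_le_add
      intro ε hε
      have h1 : liminf (fun p : ℝ × X => wf p.1) P ≤ liminf (fun p => u p + ε) P := by
        apply Filter.liminf_le_liminf
        · exact (evUW ε hε).mono fun p hp => by
            have := (abs_le.1 hp).1; clear_value u wf; linarith
        · exact bWfge
        · refine Filter.IsBoundedUnder.isCoboundedUnder_ge
            ⟨L * ‖v‖ + 1 + ε, eventually_map.2 (evUbd.mono fun p hp => ?_)⟩
          have := (abs_le.1 hp).2; clear_value u; linarith
      rw [liminf_add_const P u ε bUle.isCoboundedUnder_ge bUge, eq1] at h1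
      exact h1
  -- conclude in EReal
  have hHad : hadamardDeriv (fun z => f (g z)) x h = ((liminf u P : ℝ) : EReal) := by
    calc hadamardDeriv (fun z => f (g z)) x h
        = liminf (fun p : ℝ × X =>
            (((1 : ℝ) / p.1 : ℝ) : EReal) * (f (g (x + p.1 • p.2)) - f y)) P := rfl
      _ = liminf (fun p : ℝ × X => ((u p : ℝ) : EReal)) P := Filter.liminf_congr evEqU
      _ = ((liminf u P : ℝ) : EReal) := liminf_coe_eq evUbd
  have hDp : dPlus f (g x) (fderiv ℝ g x h) = ((liminf wf (𝓝[>] (0:ℝ)) : ℝ) : EReal) := by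
    calc dPlus f (g x) (fderiv ℝ g x h)
        = liminf (fun t : ℝ =>
            (((1 : ℝ) / t : ℝ) : EReal) * (f (y + t • v) - f y)) (𝓝[>] (0:ℝ)) := rfl
      _ = liminf (fun t : ℝ => ((wf t : ℝ) : EReal)) (𝓝[>] (0:ℝ)) := Filter.liminf_congr evEqW
      _ = ((liminf wf (𝓝[>] (0:ℝ)) : ℝ) : EReal) := liminf_coe_eq evWbd
  rw [hHad, hDp, huw]
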